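/- Let $R$ be a commutative ring, $\lambda \in R$, $e \in \mathbb{N}$, $x_1, \dots, x_e \in R$, and $F \in R[[t]]$. Then $(1+\lambda t)^{e} \cdot T_\lambda\Big( \prod_{j=1}^e (1+x_j t) \cdot F \Big) = \prod_{j=1}^e (1+(x_j+\lambda)t) \cdot T_\lambda(F)$. (This is the formal, split version of the compatibility $ (c(\mathscr{E}) \cap \alpha) \otimes \mathscr{L} = c(\mathscr{L})^{-\operatorname{rk}\mathscr{E}} c(\mathscr{E} \otimes \mathscr{L}) \cap (\alpha \otimes \mathscr{L})$ used repeatedly in the paper's proofs.) -/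

import Mathlib

open PowerSeries Finset

/-- The power series `1 + λ t`. -/
noncomputable def oneAdd {R : Type*} [CommRing R] (l : R) : PowerSeries R :=
  1 + PowerSeries.C l * PowerSeries.X

/-- The inverse power series `(1 + λ t)⁻¹`, via `invOfUnit` (constant coefficient `1`). -/
noncomputable def invOneAdd {R : Type*} [CommRing R] (l : R) : PowerSeries R :=
  PowerSeries.invOfUnit (oneAdd l) 1

/-- The tensor operation `T_λ`, defined coefficientwise:
`T_λ(∑ aᵢ tⁱ) = ∑ aᵢ tⁱ (1+λt)^{-(i+1)}`; the coefficient of `t^m` is the finite sum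
`∑_{i=0}^m aᵢ · [t^{m-i}] (1+λt)^{-(i+1)}`. -/
noncomputable def T {R : Type*} [CommRing R] (l : R) (F : PowerSeries R) : PowerSeries R :=
  PowerSeries.mk fun m => ∑ i ∈ Finset.range (m + 1),
    PowerSeries.coeff i F * PowerSeries.coeff (m - i) (invOneAdd l ^ (i + 1))

section aux
variable {R : Type*} [CommRing R] (l : R)

lemma oneAdd_mul_invOneAdd : oneAdd l * invOneAdd l = 1 := by
  apply PowerSeries.mul_invOfUnit
  simp [oneAdd]

lemma oneAdd_mul_pow (j : ℕ) : oneAdd l * invOneAdd l ^ (j + 1) = invOneAdd l ^ j := by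
  rw [pow_succ]
  calc oneAdd l * (invOneAdd l ^ j * invOneAdd l)
      = invOneAdd l ^ j * (oneAdd l * invOneAdd l) := by ring
    _ = invOneAdd l ^ j := by rw [oneAdd_mul_invOneAdd, mul_one]

lemma coeff_zero_invOneAdd_pow (j : ℕ) : coeff 0 (invOneAdd l ^ j) = 1 := by
  rw [coeff_zero_eq_constantCoeff, map_pow]
  have : constantCoeff (invOneAdd l) = 1 := by
    rw [invOneAdd, constantCoeff_invOfUnit]
    simp
  rw [this, one_pow]

lemma coeff_succ_oneAdd_mul (G : PowerSeries R) (k : ℕ) :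
    coeff (k + 1) (oneAdd l * G) = coeff (k + 1) G + l * coeff k G := by
  rw [oneAdd, add_mul, one_mul, map_add, mul_assoc, coeff_C_mul, coeff_succ_X_mul]

lemma coeff_T (F : PowerSeries R) (m : ℕ) :
    coeff m (T l F) = ∑ i ∈ Finset.range (m + 1),
      coeff i F * coeff (m - i) (invOneAdd l ^ (i + 1)) := by
  simp [T]

/-- Key lemma: `(1+λt) · T(t·F) = t · T(F)`. -/
lemma oneAdd_mul_T_X_mul (F : PowerSeries R) :
    oneAdd l * T l (X * F) = X * T l F := by
  ext m
  cases m with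
  | zero =>
    have h0 : coeff 0 (T l (X * F)) = 0 := by
      rw [coeff_T]
      simp
    rw [coeff_zero_eq_constantCoeff, map_mul, ← coeff_zero_eq_constantCoeff, h0, mul_zero,
      coeff_zero_eq_constantCoeff, map_mul, constantCoeff_X, zero_mul]
  | succ m =>
    rw [coeff_succ_oneAdd_mul, coeff_succ_X_mul, coeff_T, coeff_T, coeff_T]
    have hA : ∑ i ∈ Finset.range (m + 1 + 1),
        coeff i (X * F) * coeff (m + 1 - i) (invOneAdd l ^ (i + 1))
        = ∑ i ∈ Finset.range (m + 1),
          coeff i F * coeff (m - i) (invOneAdd l ^ (i + 2)) := by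
      rw [Finset.sum_range_succ']
      simp only [coeff_succ_X_mul, coeff_zero_X_mul, zero_mul, add_zero,
        Nat.succ_sub_succ]
    have hB : ∑ i ∈ Finset.range (m + 1),
        coeff i (X * F) * coeff (m - i) (invOneAdd l ^ (i + 1))
        = ∑ i ∈ Finset.range m,
          coeff i F * coeff (m - i - 1) (invOneAdd l ^ (i + 2)) := by
      rw [Finset.sum_range_succ']
      simp only [coeff_succ_X_mul, coeff_zero_X_mul, zero_mul, add_zero]
      simp only [Nat.sub_sub]
    rw [hA, hB, Finset.sum_range_succ, Finset.sum_range_succ, Nat.sub_self,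
      coeff_zero_invOneAdd_pow, coeff_zero_invOneAdd_pow, mul_one,
      Finset.mul_sum, add_right_comm]
    congr 1
    rw [← Finset.sum_add_distrib]
    apply Finset.sum_congr rfl
    intro i hi
    rw [Finset.mem_range] at hi
    obtain ⟨k, hk⟩ : ∃ k, m - i = k + 1 := ⟨m - i - 1, by omega⟩
    have hk' : m - i - 1 = k := by omega
    rw [hk', hk]
    have key : coeff (k + 1) (invOneAdd l ^ (i + 1)) =
        coeff (k + 1) (invOneAdd l ^ (i + 2)) + l * coeff k (invOneAdd l ^ (i + 2)) := by
      have h := coeff_succ_oneAdd_mul l (invOneAdd l ^ (i + 2)) k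
      rw [show i + 2 = (i + 1) + 1 from rfl, oneAdd_mul_pow] at h
      exact h
    rw [key]
    ring

lemma T_C_mul (c : R) (F : PowerSeries R) : T l (C c * F) = C c * T l F := by
  ext m
  rw [coeff_T, coeff_C_mul, coeff_T, Finset.mul_sum]
  apply Finset.sum_congr rfl
  intro i _
  rw [coeff_C_mul, mul_assoc]

lemma T_add (F G : PowerSeries R) : T l (F + G) = T l F + T l G := by
  ext m
  rw [coeff_T, map_add, coeff_T, coeff_T, ← Finset.sum_add_distrib]
  apply Finset.sum_congr rfl
  intro i _
  rw [map_add, add_mul]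

lemma oneAdd_mul_T_oneAdd_mul (c : R) (F : PowerSeries R) :
    oneAdd l * T l (oneAdd c * F) = oneAdd (c + l) * T l F := by
  have h1 : oneAdd c * F = F + C c * (X * F) := by
    rw [oneAdd]; ring
  rw [h1, T_add, T_C_mul, mul_add, mul_comm (oneAdd l) (C c * T l (X * F)),
    mul_assoc, mul_comm (T l (X * F)) (oneAdd l), oneAdd_mul_T_X_mul]
  have h2 : oneAdd (c + l) = oneAdd l + C c * X := by
    simp [oneAdd, map_add]; ring
  rw [h2]; ring

end aux


/-- `(1+λt)^e · T_λ(∏(1+xⱼt) · F) = ∏(1+(xⱼ+λ)t) · T_λ(F)`. -/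
theorem tensor_op_chern_compat {R : Type*} [CommRing R] (l : R) (e : ℕ) (x : Fin e → R)
    (F : PowerSeries R) :
    oneAdd l ^ e * T l ((∏ j, oneAdd (x j)) * F) =
      (∏ j, oneAdd (x j + l)) * T l F := by
  induction e with
  | zero => simp
  | succ e ih =>
    rw [Fin.prod_univ_succ, Fin.prod_univ_succ (f := fun j => oneAdd (x j + l))]
    calc oneAdd l ^ (e + 1) * T l (oneAdd (x 0) * (∏ j : Fin e, oneAdd (x j.succ)) * F)
        = oneAdd l ^ e * (oneAdd l * T l (oneAdd (x 0) * ((∏ j : Fin e, oneAdd (x j.succ)) * F))) := by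
          rw [pow_succ, mul_assoc]; ring_nf
      _ = oneAdd l ^ e * (oneAdd (x 0 + l) * T l ((∏ j : Fin e, oneAdd (x j.succ)) * F)) := by
          rw [oneAdd_mul_T_oneAdd_mul]
      _ = oneAdd (x 0 + l) * (oneAdd l ^ e * T l ((∏ j : Fin e, oneAdd (x j.succ)) * F)) := by ring
      _ = oneAdd (x 0 + l) * ((∏ j : Fin e, oneAdd (x j.succ + l)) * T l F) := by rw [ih]
      _ = _ := by ring
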